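/- Let W ⊆ P be a 2-dimensional subspace and let (u', v') be a q-orthonormal basis of W (q(u') = q(v') = 1, ⟨u',v'⟩ = 0). If u' ∉ L, then the orthogonal projection π_B restricted to R(u',v') is a linear isomorphism from R(u',v') onto B. If u' ∈ L, then R(u',v') = T. -/

import Mathlib

noncomputable section

open Quaternion

/-- The split octonions `𝕆' = ℍ × ℍ`. -/
abbrev SplitOct : Type := ℍ[ℝ] × ℍ[ℝ]

namespace SplitOct

/-- Split octonion multiplication `(a,b)(c,d) = (ac + d̄b, da + bc̄)`. -/
def mul (x y : SplitOct) : SplitOct :=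
  (x.1 * y.1 + star y.2 * x.2, y.2 * x.1 + x.2 * star y.1)

/-- Split octonion conjugation `(a,b)* = (ā, −b)`. -/
def conj (x : SplitOct) : SplitOct := (star x.1, -x.2)

lemma conj_add (x y : SplitOct) : conj (x + y) = conj x + conj y := by
  simp only [conj, Prod.fst_add, Prod.snd_add, star_add, Prod.mk_add_mk, neg_add]

lemma conj_neg (x : SplitOct) : conj (-x) = -conj x := by
  simp [conj, Prod.ext_iff]

lemma conj_sub (x y : SplitOct) : conj (x - y) = conj x - conj y := by
  rw [sub_eq_add_neg, conj_add, conj_neg, ← sub_eq_add_neg]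

lemma conj_smul (r : ℝ) (x : SplitOct) : conj (r • x) = r • conj x := by
  simp [conj, Prod.ext_iff]

lemma conj_conj (x : SplitOct) : conj (conj x) = x := by
  simp [conj]

lemma conj_zero : conj 0 = 0 := by
  simp [conj, Prod.ext_iff]

/-- The imaginary split octonions `Im 𝕆' = {x | x* = −x}`. -/
def Im : Submodule ℝ SplitOct where
  carrier := {x | conj x = -x}
  add_mem' := by
    intro a b ha hb
    simp only [Set.mem_setOf_eq] at ha hb ⊢
    rw [conj_add, ha, hb, neg_add]
  zero_mem' := by
    simp only [Set.mem_setOf_eq, conj_zero, neg_zero]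
  smul_mem' := by
    intro r a ha
    simp only [Set.mem_setOf_eq] at ha ⊢
    rw [conj_smul, ha, smul_neg]

lemma mem_Im_iff {x : SplitOct} : x ∈ Im ↔ conj x = -x := Iff.rfl

/-- `q x = x·x*`, read as a real number (its values lie in `ℝ·1 ≅ ℝ`). -/
def q (x : SplitOct) : ℝ := (mul x (conj x)).1.re

/-- The polarization `⟨x,y⟩` of the quadratic form `q`. -/
def polar (x y : SplitOct) : ℝ := (q (x + y) - q x - q y) / 2

/-- The cross product `x × y = (xy − (xy)*)/2`. -/
def cross (x y : SplitOct) : SplitOct := (2 : ℝ)⁻¹ • (mul x y - conj (mul x y))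

/-- The scalar triple product `Ω(u,v,w) = ⟨u×v, w⟩`. -/
def triple (u v w : SplitOct) : ℝ := polar (cross u v) w

lemma q_apply (x : SplitOct) : q x = normSq x.1 - normSq x.2 := by
  simp only [q, mul, conj, star_neg, neg_mul, Quaternion.self_mul_star, Quaternion.star_mul_self,
    Quaternion.re_add, Quaternion.re_neg, Quaternion.re_coe]
  ring

lemma polar_apply (x y : SplitOct) :
    polar x y = (x.1 * star y.1).re - (x.2 * star y.2).re := by
  simp only [polar, q_apply, Prod.fst_add, Prod.snd_add, Quaternion.normSq_def',
    Quaternion.re_mul, Quaternion.re_add, Quaternion.imI_add, Quaternion.imJ_add,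
    Quaternion.imK_add, Quaternion.re_star, Quaternion.imI_star, Quaternion.imJ_star,
    Quaternion.imK_star]
  ring

lemma polar_add_left (x x' y : SplitOct) : polar (x + x') y = polar x y + polar x' y := by
  simp only [polar_apply, Prod.fst_add, Prod.snd_add, add_mul, Quaternion.re_add]
  ring

lemma polar_add_right (x y y' : SplitOct) : polar x (y + y') = polar x y + polar x y' := by
  simp only [polar_apply, Prod.fst_add, Prod.snd_add, star_add, mul_add, Quaternion.re_add]
  ring

lemma polar_smul_left (r : ℝ) (x y : SplitOct) : polar (r • x) y = r * polar x y := by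
  simp only [polar_apply, Prod.smul_fst, Prod.smul_snd, smul_mul_assoc, Quaternion.re_smul,
    smul_eq_mul]
  ring

lemma polar_smul_right (r : ℝ) (x y : SplitOct) : polar x (r • y) = r * polar x y := by
  simp only [polar_apply, Prod.smul_fst, Prod.smul_snd, Quaternion.star_smul,
    mul_smul_comm, Quaternion.re_smul, smul_eq_mul]
  ring

lemma polar_zero_left (y : SplitOct) : polar 0 y = 0 := by
  simp [polar_apply]

lemma polar_zero_right (x : SplitOct) : polar x 0 = 0 := by
  simp [polar_apply]

lemma mul_add_left (x x' y : SplitOct) : mul (x + x') y = mul x y + mul x' y := by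
  simp only [mul, Prod.fst_add, Prod.snd_add, add_mul, mul_add, Prod.mk_add_mk, Prod.mk.injEq]
  constructor <;> abel

lemma mul_add_right (x y y' : SplitOct) : mul x (y + y') = mul x y + mul x y' := by
  simp only [mul, Prod.fst_add, Prod.snd_add, star_add, add_mul, mul_add, Prod.mk_add_mk,
    Prod.mk.injEq]
  constructor <;> abel

lemma mul_smul_left (r : ℝ) (x y : SplitOct) : mul (r • x) y = r • mul x y := by
  simp only [mul, Prod.smul_fst, Prod.smul_snd, smul_mul_assoc, mul_smul_comm, Prod.smul_mk,
    smul_add]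

lemma mul_smul_right (r : ℝ) (x y : SplitOct) : mul x (r • y) = r • mul x y := by
  simp only [mul, Prod.smul_fst, Prod.smul_snd, Quaternion.star_smul, smul_mul_assoc,
    mul_smul_comm, Prod.smul_mk, smul_add]

lemma mul_zero_left (y : SplitOct) : mul 0 y = 0 := by
  simp [mul, Prod.ext_iff]

lemma mul_zero_right (x : SplitOct) : mul x 0 = 0 := by
  simp [mul, Prod.ext_iff]

lemma cross_add_left (x x' y : SplitOct) : cross (x + x') y = cross x y + cross x' y := by
  rw [cross, cross, cross, mul_add_left, conj_add]
  module

lemma cross_add_right (x y y' : SplitOct) : cross x (y + y') = cross x y + cross x y' := by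
  rw [cross, cross, cross, mul_add_right, conj_add]
  module

lemma cross_smul_left (r : ℝ) (x y : SplitOct) : cross (r • x) y = r • cross x y := by
  rw [cross, cross, mul_smul_left, conj_smul]
  module

lemma cross_smul_right (r : ℝ) (x y : SplitOct) : cross x (r • y) = r • cross x y := by
  rw [cross, cross, mul_smul_right, conj_smul]
  module

lemma cross_zero_left (y : SplitOct) : cross 0 y = 0 := by
  simp [cross, mul_zero_left, conj_zero]

lemma cross_zero_right (x : SplitOct) : cross x 0 = 0 := by
  simp [cross, mul_zero_right, conj_zero]

lemma cross_mem_Im (x y : SplitOct) : cross x y ∈ Im := by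
  rw [mem_Im_iff, cross, conj_smul, conj_sub, conj_conj]
  module

lemma triple_add₁ (u u' v w : SplitOct) :
    triple (u + u') v w = triple u v w + triple u' v w := by
  rw [triple, triple, triple, cross_add_left, polar_add_left]

lemma triple_add₂ (u v v' w : SplitOct) :
    triple u (v + v') w = triple u v w + triple u v' w := by
  rw [triple, triple, triple, cross_add_right, polar_add_left]

lemma triple_add₃ (u v w w' : SplitOct) :
    triple u v (w + w') = triple u v w + triple u v w' :=
  polar_add_right _ _ _

lemma triple_smul₁ (r : ℝ) (u v w : SplitOct) : triple (r • u) v w = r * triple u v w := by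
  rw [triple, triple, cross_smul_left, polar_smul_left]

lemma triple_smul₂ (r : ℝ) (u v w : SplitOct) : triple u (r • v) w = r * triple u v w := by
  rw [triple, triple, cross_smul_right, polar_smul_left]

lemma triple_smul₃ (r : ℝ) (u v w : SplitOct) : triple u v (r • w) = r * triple u v w :=
  polar_smul_right _ _ _

lemma triple_zero₁ (v w : SplitOct) : triple 0 v w = 0 := by
  rw [triple, cross_zero_left, polar_zero_left]

lemma triple_zero₂ (u w : SplitOct) : triple u 0 w = 0 := by
  rw [triple, cross_zero_right, polar_zero_left]

lemma triple_zero₃ (u v : SplitOct) : triple u v 0 = 0 :=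
  polar_zero_right _

/-- The orthogonal complement of `P` inside the imaginary split octonions. -/
def orth (P : Submodule ℝ SplitOct) : Submodule ℝ SplitOct where
  carrier := {x | x ∈ Im ∧ ∀ y ∈ P, polar x y = 0}
  add_mem' := by
    rintro a b ⟨ha1, ha2⟩ ⟨hb1, hb2⟩
    exact ⟨Im.add_mem ha1 hb1, fun y hy => by
      rw [polar_add_left, ha2 y hy, hb2 y hy, add_zero]⟩
  zero_mem' := ⟨Im.zero_mem, fun y _ => polar_zero_left y⟩
  smul_mem' := by
    rintro r a ⟨ha1, ha2⟩
    exact ⟨Im.smul_mem r ha1, fun y hy => by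
      rw [polar_smul_left, ha2 y hy, mul_zero]⟩

/-- The annihilator `Ann x = {v ∈ Im 𝕆' | x × v = 0}`. -/
def Ann (x : SplitOct) : Submodule ℝ SplitOct where
  carrier := {v | v ∈ Im ∧ cross x v = 0}
  add_mem' := by
    rintro a b ⟨ha1, ha2⟩ ⟨hb1, hb2⟩
    exact ⟨Im.add_mem ha1 hb1, by rw [cross_add_right, ha2, hb2, add_zero]⟩
  zero_mem' := ⟨Im.zero_mem, cross_zero_right x⟩
  smul_mem' := by
    rintro r a ⟨ha1, ha2⟩
    exact ⟨Im.smul_mem r ha1, by rw [cross_smul_right, ha2, smul_zero]⟩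

/-- An isotropic line of `Im 𝕆'`. -/
def IsIsotropicLine (ℓ : Submodule ℝ SplitOct) : Prop :=
  ∃ x, x ∈ Im ∧ x ≠ 0 ∧ q x = 0 ∧ ℓ = Submodule.span ℝ {x}

/-- An annihilator photon: a 2-dimensional totally isotropic subspace of `Im 𝕆'`
on which the cross product vanishes identically. -/
def IsAnnihilatorPhoton (ω : Submodule ℝ SplitOct) : Prop :=
  ω ≤ Im ∧ Module.finrank ℝ ω = 2 ∧ (∀ x ∈ ω, q x = 0) ∧
    ∀ x ∈ ω, ∀ y ∈ ω, cross x y = 0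


/-- The imaginary unit `𝐢 = (i, 0)`. -/
def oi : SplitOct := ((⟨0, 1, 0, 0⟩ : ℍ[ℝ]), 0)

/-- The imaginary unit `𝐣 = (j, 0)`. -/
def oj : SplitOct := ((⟨0, 0, 1, 0⟩ : ℍ[ℝ]), 0)

/-- The imaginary unit `𝐤 = (k, 0)`. -/
def ok : SplitOct := ((⟨0, 0, 0, 1⟩ : ℍ[ℝ]), 0)

/-- The split unit `𝐥 = (0, 1)`. -/
def ol : SplitOct := (0, 1)

/-- `𝐥𝐢 = 𝐥·𝐢`. -/
def oli : SplitOct := mul ol oi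

/-- `𝐥𝐣 = 𝐥·𝐣`. -/
def olj : SplitOct := mul ol oj

/-- `𝐥𝐤 = 𝐥·𝐤`. -/
def olk : SplitOct := mul ol ok

/-- `L = ℝ𝐢`. -/
def Lline : Submodule ℝ SplitOct := Submodule.span ℝ {oi}

/-- `T = span{𝐥, 𝐥𝐢}`. -/
def Tplane : Submodule ℝ SplitOct := Submodule.span ℝ {ol, oli}

/-- `N = span{𝐣, 𝐤}`. -/
def Nplane : Submodule ℝ SplitOct := Submodule.span ℝ {oj, ok}

/-- `B = span{𝐥𝐣, 𝐥𝐤}`. -/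
def Bplane : Submodule ℝ SplitOct := Submodule.span ℝ {olj, olk}

/-- `P = L ⊕ N = span{𝐢, 𝐣, 𝐤}`. -/
def Pplane : Submodule ℝ SplitOct := Submodule.span ℝ {oi, oj, ok}

lemma oi_mem_P : oi ∈ Pplane := Submodule.subset_span (by simp)

lemma N_le_P : Nplane ≤ Pplane := by
  refine Submodule.span_le.mpr ?_
  rintro x hx
  simp only [Set.mem_insert_iff, Set.mem_singleton_iff] at hx
  rcases hx with rfl | rfl
  · exact Submodule.subset_span (by simp)
  · exact Submodule.subset_span (by simp)

/-- The pencil `𝒫₀` of linear maps `φ : P → Im 𝕆'` with `φ 𝐢 = 0`, `φ N ⊆ T`, and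
`φ (𝐢×n) = 𝐢×(φ n)` for all `n ∈ N`. -/
def Pzero : Set (Pplane →ₗ[ℝ] SplitOct) :=
  {φ | (∀ x, φ x ∈ Im) ∧
    φ ⟨oi, oi_mem_P⟩ = 0 ∧
    (∀ n, ∀ hn : n ∈ Nplane, φ ⟨n, N_le_P hn⟩ ∈ Tplane) ∧
    ∀ n, ∀ hn : n ∈ Nplane, ∀ hmem : cross oi n ∈ Pplane,
      φ ⟨cross oi n, hmem⟩ = cross oi (φ ⟨n, N_le_P hn⟩)}

/-- The subspace `R(u,v) = {z ∈ P⊥ : ⟨φ u, z⟩ + ⟨φ v, (uv)z⟩ = 0 for all φ ∈ 𝒫₀}`. -/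
def Rsub (u v : SplitOct) (hu : u ∈ Pplane) (hv : v ∈ Pplane) : Submodule ℝ SplitOct where
  carrier := {z | z ∈ orth Pplane ∧
    ∀ φ ∈ Pzero, polar (φ ⟨u, hu⟩) z + polar (φ ⟨v, hv⟩) (mul (mul u v) z) = 0}
  add_mem' := by
    rintro a b ⟨ha1, ha2⟩ ⟨hb1, hb2⟩
    refine ⟨(orth Pplane).add_mem ha1 hb1, fun φ hφ => ?_⟩
    rw [mul_add_right, polar_add_right, polar_add_right]
    have h1 := ha2 φ hφ
    have h2 := hb2 φ hφ
    linarith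
  zero_mem' := by
    refine ⟨(orth Pplane).zero_mem, fun φ hφ => ?_⟩
    rw [mul_zero_right, polar_zero_right, polar_zero_right, add_zero]
  smul_mem' := by
    rintro r a ⟨ha1, ha2⟩
    refine ⟨(orth Pplane).smul_mem r ha1, fun φ hφ => ?_⟩
    rw [mul_smul_right, polar_smul_right, polar_smul_right, ← mul_add, ha2 φ hφ, mul_zero]

/-! ### Auxiliary lemmas -/

/-- A quaternion literal typed as `ℍ[ℝ]`. -/
def qmk (a b c d : ℝ) : ℍ[ℝ] := ⟨a, b, c, d⟩

@[simp] lemma mk_eq_qmk (a b c d : ℝ) :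
    (⟨a, b, c, d⟩ : QuaternionAlgebra ℝ (-1) 0 (-1)) = qmk a b c d := rfl

@[simp] lemma qmk_re (a b c d : ℝ) : (qmk a b c d).re = a := rfl
@[simp] lemma qmk_imI (a b c d : ℝ) : (qmk a b c d).imI = b := rfl
@[simp] lemma qmk_imJ (a b c d : ℝ) : (qmk a b c d).imJ = c := rfl
@[simp] lemma qmk_imK (a b c d : ℝ) : (qmk a b c d).imK = d := rfl

lemma quat_comb (a b c : ℝ) :
    a • oi + (b • oj + c • ok) = (((⟨0, a, b, c⟩ : ℍ[ℝ]), 0) : SplitOct) := by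
  refine Prod.ext ?_ (by simp [oi, oj, ok])
  simp only [oi, oj, ok, Prod.fst_add, Prod.smul_fst]
  apply QuaternionAlgebra.ext <;> simp

lemma mem_P_iff {x : SplitOct} :
    x ∈ Pplane ↔ ∃ a b c : ℝ, x = (((⟨0, a, b, c⟩ : ℍ[ℝ]), 0) : SplitOct) := by
  constructor
  · intro hx
    rw [Pplane, show ({oi, oj, ok} : Set SplitOct) = insert oi {oj, ok} from rfl,
      Submodule.mem_span_insert] at hx
    obtain ⟨a, z, hz, rfl⟩ := hx
    rw [Submodule.mem_span_pair] at hz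
    obtain ⟨b, c, rfl⟩ := hz
    exact ⟨a, b, c, (quat_comb a b c).symm ▸ rfl⟩
  · rintro ⟨a, b, c, rfl⟩
    rw [Pplane, show ({oi, oj, ok} : Set SplitOct) = insert oi {oj, ok} from rfl,
      Submodule.mem_span_insert]
    exact ⟨a, b • oj + c • ok, Submodule.mem_span_pair.mpr ⟨b, c, rfl⟩, (quat_comb a b c).symm⟩

lemma oli_eq : oli = ((0, (⟨0, -1, 0, 0⟩ : ℍ[ℝ])) : SplitOct) := by
  refine Prod.ext (by simp [oli, mul, ol, oi]) ?_
  simp only [oli, mul, ol, oi]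
  apply QuaternionAlgebra.ext <;> simp

lemma olj_eq : olj = ((0, (⟨0, 0, -1, 0⟩ : ℍ[ℝ])) : SplitOct) := by
  refine Prod.ext (by simp [olj, mul, ol, oj]) ?_
  simp only [olj, mul, ol, oj]
  apply QuaternionAlgebra.ext <;> simp

lemma olk_eq : olk = ((0, (⟨0, 0, 0, -1⟩ : ℍ[ℝ])) : SplitOct) := by
  refine Prod.ext (by simp [olk, mul, ol, ok]) ?_
  simp only [olk, mul, ol, ok]
  apply QuaternionAlgebra.ext <;> simp

lemma T_comb (a b : ℝ) : a • ol + (-b) • oli = ((0, (⟨a, b, 0, 0⟩ : ℍ[ℝ])) : SplitOct) := by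
  rw [oli_eq]
  refine Prod.ext (by simp [ol]) ?_
  simp only [ol, Prod.snd_add, Prod.smul_snd]
  apply QuaternionAlgebra.ext <;> simp

lemma mem_T_iff {x : SplitOct} :
    x ∈ Tplane ↔ ∃ a b : ℝ, x = ((0, (⟨a, b, 0, 0⟩ : ℍ[ℝ])) : SplitOct) := by
  rw [Tplane, Submodule.mem_span_pair]
  constructor
  · rintro ⟨s, t, rfl⟩
    exact ⟨s, -t, by rw [← T_comb]; ring_nf⟩
  · rintro ⟨a, b, rfl⟩
    exact ⟨a, -b, T_comb a b⟩

lemma B_comb (c d : ℝ) : (-c) • olj + (-d) • olk = ((0, (⟨0, 0, c, d⟩ : ℍ[ℝ])) : SplitOct) := by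
  rw [olj_eq, olk_eq]
  refine Prod.ext (by simp) ?_
  simp only [Prod.snd_add, Prod.smul_snd]
  apply QuaternionAlgebra.ext <;> simp

lemma mem_B_iff {x : SplitOct} :
    x ∈ Bplane ↔ ∃ c d : ℝ, x = ((0, (⟨0, 0, c, d⟩ : ℍ[ℝ])) : SplitOct) := by
  rw [Bplane, Submodule.mem_span_pair]
  constructor
  · rintro ⟨s, t, rfl⟩
    exact ⟨-s, -t, by rw [← B_comb]; ring_nf⟩
  · rintro ⟨c, d, rfl⟩
    exact ⟨-c, -d, B_comb c d⟩

lemma N_comb (b c : ℝ) : b • oj + c • ok = (((⟨0, 0, b, c⟩ : ℍ[ℝ]), 0) : SplitOct) := by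
  refine Prod.ext ?_ (by simp [oj, ok])
  simp only [oj, ok, Prod.fst_add, Prod.smul_fst]
  apply QuaternionAlgebra.ext <;> simp

lemma mem_N_iff {x : SplitOct} :
    x ∈ Nplane ↔ ∃ b c : ℝ, x = (((⟨0, 0, b, c⟩ : ℍ[ℝ]), 0) : SplitOct) := by
  rw [Nplane, Submodule.mem_span_pair]
  constructor
  · rintro ⟨s, t, rfl⟩
    exact ⟨s, t, (N_comb s t).symm ▸ rfl⟩
  · rintro ⟨b, c, rfl⟩
    exact ⟨b, c, N_comb b c⟩

lemma mem_L_iff {x : SplitOct} :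
    x ∈ Lline ↔ ∃ s : ℝ, x = (((⟨0, s, 0, 0⟩ : ℍ[ℝ]), 0) : SplitOct) := by
  rw [Lline, Submodule.mem_span_singleton]
  constructor
  · rintro ⟨s, rfl⟩
    refine ⟨s, ?_⟩
    refine Prod.ext ?_ (by simp [oi])
    simp only [oi, Prod.smul_fst]
    apply QuaternionAlgebra.ext <;> simp
  · rintro ⟨s, rfl⟩
    refine ⟨s, ?_⟩
    refine Prod.ext ?_ (by simp [oi])
    simp only [oi, Prod.smul_fst]
    apply QuaternionAlgebra.ext <;> simp

lemma mem_orthP_iff {z : SplitOct} :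
    z ∈ orth Pplane ↔ ∃ w : ℍ[ℝ], z = (0, w) := by
  constructor
  · rintro ⟨hIm, hperp⟩
    rw [mem_Im_iff] at hIm
    have h1 : star z.1 = -z.1 := congrArg Prod.fst hIm
    have hre : z.1.re = 0 := by
      have := congrArg QuaternionAlgebra.re h1
      simp at this
      linarith
    have hi : z.1.imI = 0 := by
      have := hperp oi (Submodule.subset_span (by simp))
      simp [polar_apply, oi, Quaternion.re_mul, hre] at this
      linarith
    have hj : z.1.imJ = 0 := by
      have := hperp oj (Submodule.subset_span (by simp))
      simp [polar_apply, oj, Quaternion.re_mul, hre] at this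
      linarith
    have hk : z.1.imK = 0 := by
      have := hperp ok (Submodule.subset_span (by simp))
      simp [polar_apply, ok, Quaternion.re_mul, hre] at this
      linarith
    refine ⟨z.2, Prod.ext ?_ rfl⟩
    apply QuaternionAlgebra.ext <;> simp [hre, hi, hj, hk]
  · rintro ⟨w, rfl⟩
    refine ⟨?_, ?_⟩
    · rw [mem_Im_iff, conj]
      refine Prod.ext ?_ (by simp)
      simp
    · intro y hy
      obtain ⟨a, b, c, rfl⟩ := mem_P_iff.mp hy
      simp [polar_apply]

lemma mem_orthB_iff {z : SplitOct} :
    z ∈ orth Bplane ↔ z.1.re = 0 ∧ z.2.imJ = 0 ∧ z.2.imK = 0 := by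
  constructor
  · rintro ⟨hIm, hperp⟩
    rw [mem_Im_iff] at hIm
    have h1 : star z.1 = -z.1 := congrArg Prod.fst hIm
    have hre : z.1.re = 0 := by
      have := congrArg QuaternionAlgebra.re h1
      simp at this
      linarith
    have hj : z.2.imJ = 0 := by
      have := hperp olj (Submodule.subset_span (by simp))
      rw [olj_eq] at this
      simp [polar_apply, Quaternion.re_mul] at this
      linarith
    have hk : z.2.imK = 0 := by
      have := hperp olk (Submodule.subset_span (by simp))
      rw [olk_eq] at this
      simp [polar_apply, Quaternion.re_mul] at this
      linarith
    exact ⟨hre, hj, hk⟩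
  · rintro ⟨hre, hj, hk⟩
    refine ⟨?_, ?_⟩
    · rw [mem_Im_iff, conj]
      refine Prod.ext ?_ (by simp)
      apply QuaternionAlgebra.ext <;> simp [hre]
    · intro y hy
      obtain ⟨c, d, rfl⟩ := mem_B_iff.mp hy
      simp [polar_apply, Quaternion.re_mul, hj, hk]

/-- Ambient linear map underlying the first pencil generator. -/
def PhiA : SplitOct →ₗ[ℝ] SplitOct where
  toFun x := ((0, (⟨x.1.imJ, x.1.imK, 0, 0⟩ : ℍ[ℝ])) : SplitOct)
  map_add' x y := by
    refine Prod.ext (by simp) ?_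
    apply QuaternionAlgebra.ext <;> simp
  map_smul' r x := by
    refine Prod.ext (by simp) ?_
    apply QuaternionAlgebra.ext <;> simp

/-- Ambient linear map underlying the second pencil generator. -/
def PhiB : SplitOct →ₗ[ℝ] SplitOct where
  toFun x := ((0, (⟨x.1.imK, -x.1.imJ, 0, 0⟩ : ℍ[ℝ])) : SplitOct)
  map_add' x y := by
    refine Prod.ext (by simp) ?_
    apply QuaternionAlgebra.ext <;> [skip; skip; skip; skip] <;> simp <;> ring
  map_smul' r x := by
    refine Prod.ext (by simp) ?_
    apply QuaternionAlgebra.ext <;> simp [mul_comm]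

/-- First pencil generator. -/
def phiA : Pplane →ₗ[ℝ] SplitOct := PhiA.comp Pplane.subtype

/-- Second pencil generator. -/
def phiB : Pplane →ₗ[ℝ] SplitOct := PhiB.comp Pplane.subtype

lemma phiA_apply (x : SplitOct) (hx : x ∈ Pplane) :
    phiA ⟨x, hx⟩ = ((0, (⟨x.1.imJ, x.1.imK, 0, 0⟩ : ℍ[ℝ])) : SplitOct) := rfl

lemma phiB_apply (x : SplitOct) (hx : x ∈ Pplane) :
    phiB ⟨x, hx⟩ = ((0, (⟨x.1.imK, -x.1.imJ, 0, 0⟩ : ℍ[ℝ])) : SplitOct) := rfl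

lemma cross_oi_N (b c : ℝ) :
    cross oi (((⟨0, 0, b, c⟩ : ℍ[ℝ]), 0) : SplitOct) = (((⟨0, 0, -c, b⟩ : ℍ[ℝ]), 0) : SplitOct) := by
  rw [cross]
  refine Prod.ext ?_ ?_ <;>
    simp only [mul, conj, oi, Prod.smul_fst, Prod.smul_snd, Prod.fst_sub, Prod.snd_sub] <;>
    apply QuaternionAlgebra.ext <;> simp <;> ring

lemma cross_oi_snd (w : ℍ[ℝ]) :
    cross oi ((0, w) : SplitOct) = ((0, (⟨-w.imI, w.re, w.imK, -w.imJ⟩ : ℍ[ℝ])) : SplitOct) := by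
  rw [cross]
  refine Prod.ext ?_ ?_ <;>
    simp only [mul, conj, oi, Prod.smul_fst, Prod.smul_snd, Prod.fst_sub, Prod.snd_sub] <;>
    apply QuaternionAlgebra.ext <;> simp <;> ring

lemma snd_mem_Im (w : ℍ[ℝ]) : ((0, w) : SplitOct) ∈ Im := by
  rw [mem_Im_iff, conj]
  exact Prod.ext (by simp) (by simp)

lemma phiA_mem : phiA ∈ Pzero := by
  refine ⟨fun x => ?_, ?_, fun n hn => ?_, fun n hn hmem => ?_⟩
  · rw [phiA_apply]; exact snd_mem_Im _
  · rw [phiA_apply]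
    refine Prod.ext (by simp) ?_
    apply QuaternionAlgebra.ext <;> simp [oi]
  · obtain ⟨b, c, rfl⟩ := mem_N_iff.mp hn
    rw [phiA_apply]
    exact mem_T_iff.mpr ⟨b, c, rfl⟩
  · obtain ⟨b, c, rfl⟩ := mem_N_iff.mp hn
    have h : (⟨cross oi (((⟨0, 0, b, c⟩ : ℍ[ℝ]), 0) : SplitOct), hmem⟩ : Pplane)
        = ⟨(((⟨0, 0, -c, b⟩ : ℍ[ℝ]), 0) : SplitOct), cross_oi_N b c ▸ hmem⟩ := Subtype.ext (cross_oi_N b c)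
    rw [h, phiA_apply, phiA_apply]; simp only [mk_eq_qmk]; rw [cross_oi_snd]
    refine Prod.ext (by simp) ?_
    apply QuaternionAlgebra.ext <;> simp

lemma phiB_mem : phiB ∈ Pzero := by
  refine ⟨fun x => ?_, ?_, fun n hn => ?_, fun n hn hmem => ?_⟩
  · rw [phiB_apply]; exact snd_mem_Im _
  · rw [phiB_apply]
    refine Prod.ext (by simp) ?_
    apply QuaternionAlgebra.ext <;> simp [oi]
  · obtain ⟨b, c, rfl⟩ := mem_N_iff.mp hn
    rw [phiB_apply]
    exact mem_T_iff.mpr ⟨c, -b, rfl⟩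
  · obtain ⟨b, c, rfl⟩ := mem_N_iff.mp hn
    have h : (⟨cross oi (((⟨0, 0, b, c⟩ : ℍ[ℝ]), 0) : SplitOct), hmem⟩ : Pplane)
        = ⟨(((⟨0, 0, -c, b⟩ : ℍ[ℝ]), 0) : SplitOct), cross_oi_N b c ▸ hmem⟩ := Subtype.ext (cross_oi_N b c)
    rw [h, phiB_apply, phiB_apply]; simp only [mk_eq_qmk]; rw [cross_oi_snd]
    refine Prod.ext (by simp) ?_
    apply QuaternionAlgebra.ext <;> simp

lemma cross_oi_oj : cross oi oj = ok := by
  rw [show oj = (((⟨0, 0, 1, 0⟩ : ℍ[ℝ]), 0) : SplitOct) from rfl, cross_oi_N]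
  refine Prod.ext ?_ rfl
  apply QuaternionAlgebra.ext <;> simp [ok]

lemma oj_mem_N : oj ∈ Nplane := Submodule.subset_span (by simp)

lemma ok_mem_P : ok ∈ Pplane := Submodule.subset_span (by simp)

lemma oj_mem_P : oj ∈ Pplane := Submodule.subset_span (by simp)

lemma Pzero_decomp {φ : Pplane →ₗ[ℝ] SplitOct} (hφ : φ ∈ Pzero) :
    ∃ a b : ℝ, φ = a • phiA + b • phiB := by
  obtain ⟨hIm, hi, hT, hcr⟩ := hφ
  obtain ⟨a, b', hjval⟩ := mem_T_iff.mp (hT oj oj_mem_N)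
  have hmem : cross oi oj ∈ Pplane := cross_oi_oj ▸ ok_mem_P
  have hkval : φ ⟨ok, ok_mem_P⟩ = ((0, (⟨-b', a, 0, 0⟩ : ℍ[ℝ])) : SplitOct) := by
    have h1 := hcr oj oj_mem_N hmem
    have h2 : (⟨cross oi oj, hmem⟩ : Pplane) = ⟨ok, ok_mem_P⟩ := Subtype.ext cross_oi_oj
    rw [h2] at h1
    have h3 : (⟨oj, N_le_P oj_mem_N⟩ : Pplane) = ⟨oj, oj_mem_P⟩ := rfl
    rw [h1, h3, hjval]; simp only [mk_eq_qmk]; rw [cross_oi_snd]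
    refine Prod.ext rfl ?_
    apply QuaternionAlgebra.ext <;> simp
  refine ⟨a, -b', ?_⟩
  apply LinearMap.ext
  rintro ⟨x, hx⟩
  obtain ⟨c1, c2, c3, hxeq⟩ := mem_P_iff.mp hx
  subst hxeq
  have hrep : (⟨(((⟨0, c1, c2, c3⟩ : ℍ[ℝ]), 0) : SplitOct), hx⟩ : Pplane)
      = c1 • ⟨oi, oi_mem_P⟩ + (c2 • ⟨oj, oj_mem_P⟩ + c3 • ⟨ok, ok_mem_P⟩) := by
    apply Subtype.ext
    simp only [Submodule.coe_add, SetLike.val_smul]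
    exact (quat_comb c1 c2 c3).symm
  have hL : φ ⟨(((⟨0, c1, c2, c3⟩ : ℍ[ℝ]), 0) : SplitOct), hx⟩
      = ((0, (⟨c2 * a - c3 * b', c2 * b' + c3 * a, 0, 0⟩ : ℍ[ℝ])) : SplitOct) := by
    rw [hrep, map_add, map_add, map_smul, map_smul, map_smul, hi, hjval, hkval]
    refine Prod.ext (by simp) ?_
    simp only [Prod.snd_add, Prod.smul_snd, smul_zero, zero_add]
    apply QuaternionAlgebra.ext <;> simp <;> ring
  have hR : (a • phiA + (-b') • phiB) ⟨(((⟨0, c1, c2, c3⟩ : ℍ[ℝ]), 0) : SplitOct), hx⟩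
      = ((0, (⟨c2 * a - c3 * b', c2 * b' + c3 * a, 0, 0⟩ : ℍ[ℝ])) : SplitOct) := by
    simp only [LinearMap.add_apply, LinearMap.smul_apply, phiA_apply, phiB_apply]
    refine Prod.ext (by simp) ?_
    simp only [Prod.snd_add, Prod.smul_snd]
    apply QuaternionAlgebra.ext <;> simp <;> ring
  exact hL.trans hR.symm

lemma mem_Rsub_iff {u v : SplitOct} (hu : u ∈ Pplane) (hv : v ∈ Pplane) {z : SplitOct} :
    z ∈ Rsub u v hu hv ↔ z ∈ orth Pplane ∧
      (polar (phiA ⟨u, hu⟩) z + polar (phiA ⟨v, hv⟩) (mul (mul u v) z) = 0) ∧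
      (polar (phiB ⟨u, hu⟩) z + polar (phiB ⟨v, hv⟩) (mul (mul u v) z) = 0) := by
  constructor
  · rintro ⟨h1, h2⟩
    exact ⟨h1, h2 phiA phiA_mem, h2 phiB phiB_mem⟩
  · rintro ⟨h1, hA, hB⟩
    refine ⟨h1, fun φ hφ => ?_⟩
    obtain ⟨a, b, rfl⟩ := Pzero_decomp hφ
    simp only [LinearMap.add_apply, LinearMap.smul_apply, polar_add_left, polar_smul_left]
    linear_combination a * hA + b * hB

lemma mul_PP (a b : ℍ[ℝ]) : mul ((a, 0) : SplitOct) ((b, 0) : SplitOct) = (a * b, 0) := by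
  simp [mul, Prod.ext_iff]

lemma mul_PW (a w : ℍ[ℝ]) : mul ((a, 0) : SplitOct) ((0, w) : SplitOct) = (0, w * a) := by
  simp [mul, Prod.ext_iff]

lemma polar_snd (p s : ℍ[ℝ]) :
    polar ((0, p) : SplitOct) ((0, s) : SplitOct) = -((p * star s).re) := by
  simp [polar_apply]

set_option maxHeartbeats 2000000 in
lemma condA_eval (u1 u2 u3 v1 v2 v3 w0 w1 w2 w3 : ℝ)
    (hu : (((⟨0, u1, u2, u3⟩ : ℍ[ℝ]), 0) : SplitOct) ∈ Pplane)
    (hv : (((⟨0, v1, v2, v3⟩ : ℍ[ℝ]), 0) : SplitOct) ∈ Pplane) :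
    polar (phiA ⟨(((⟨0, u1, u2, u3⟩ : ℍ[ℝ]), 0) : SplitOct), hu⟩) ((0, (⟨w0, w1, w2, w3⟩ : ℍ[ℝ])) : SplitOct)
      + polar (phiA ⟨(((⟨0, v1, v2, v3⟩ : ℍ[ℝ]), 0) : SplitOct), hv⟩)
        (mul (mul (((⟨0, u1, u2, u3⟩ : ℍ[ℝ]), 0) : SplitOct) (((⟨0, v1, v2, v3⟩ : ℍ[ℝ]), 0) : SplitOct))
          ((0, (⟨w0, w1, w2, w3⟩ : ℍ[ℝ])) : SplitOct))
    = (2*u3*v2*v3 - u2 - u2*v3^2 + u2*v2^2 + u1*v1*v2) * w0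
      + (-u3 + u3*v3^2 - u3*v2^2 + 2*u2*v2*v3 + u1*v1*v3) * w1
      + (u3*v1*v2 + u2*v1*v3 - 2*u1*v2*v3) * w2
      + (u3*v1*v3 - u2*v1*v2 - u1*v3^2 + u1*v2^2) * w3 := by
  rw [phiA_apply, phiA_apply]; simp only [mk_eq_qmk]; rw [mul_PP, mul_PW, polar_snd, polar_snd]
  simp only [qmk_re, qmk_imI, qmk_imJ, qmk_imK, Quaternion.re_mul, Quaternion.re_star, Quaternion.imI_star, Quaternion.imJ_star,
    Quaternion.imK_star, Quaternion.imI_mul, Quaternion.imJ_mul, Quaternion.imK_mul]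
  ring

set_option maxHeartbeats 2000000 in
lemma condB_eval (u1 u2 u3 v1 v2 v3 w0 w1 w2 w3 : ℝ)
    (hu : (((⟨0, u1, u2, u3⟩ : ℍ[ℝ]), 0) : SplitOct) ∈ Pplane)
    (hv : (((⟨0, v1, v2, v3⟩ : ℍ[ℝ]), 0) : SplitOct) ∈ Pplane) :
    polar (phiB ⟨(((⟨0, u1, u2, u3⟩ : ℍ[ℝ]), 0) : SplitOct), hu⟩) ((0, (⟨w0, w1, w2, w3⟩ : ℍ[ℝ])) : SplitOct)
      + polar (phiB ⟨(((⟨0, v1, v2, v3⟩ : ℍ[ℝ]), 0) : SplitOct), hv⟩)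
        (mul (mul (((⟨0, u1, u2, u3⟩ : ℍ[ℝ]), 0) : SplitOct) (((⟨0, v1, v2, v3⟩ : ℍ[ℝ]), 0) : SplitOct))
          ((0, (⟨w0, w1, w2, w3⟩ : ℍ[ℝ])) : SplitOct))
    = (-u3 + u3*v3^2 - u3*v2^2 + 2*u2*v2*v3 + u1*v1*v3) * w0
      - (2*u3*v2*v3 - u2 - u2*v3^2 + u2*v2^2 + u1*v1*v2) * w1
      + (u3*v1*v3 - u2*v1*v2 - u1*v3^2 + u1*v2^2) * w2
      - (u3*v1*v2 + u2*v1*v3 - 2*u1*v2*v3) * w3 := by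
  rw [phiB_apply, phiB_apply]; simp only [mk_eq_qmk]; rw [mul_PP, mul_PW, polar_snd, polar_snd]
  simp only [qmk_re, qmk_imI, qmk_imJ, qmk_imK, Quaternion.re_mul, Quaternion.re_star, Quaternion.imI_star, Quaternion.imJ_star,
    Quaternion.imK_star, Quaternion.imI_mul, Quaternion.imJ_mul, Quaternion.imK_mul]
  ring

lemma q_P (a b c : ℝ) : q (((⟨0, a, b, c⟩ : ℍ[ℝ]), 0) : SplitOct) = a^2 + b^2 + c^2 := by
  simp [q_apply, Quaternion.normSq_def']

lemma polar_PP (a1 a2 a3 b1 b2 b3 : ℝ) :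
    polar (((⟨0, a1, a2, a3⟩ : ℍ[ℝ]), 0) : SplitOct) (((⟨0, b1, b2, b3⟩ : ℍ[ℝ]), 0) : SplitOct)
    = a1*b1 + a2*b2 + a3*b3 := by
  simp [polar_apply, Quaternion.re_mul, Quaternion.re_star, Quaternion.imI_star,
    Quaternion.imJ_star, Quaternion.imK_star]

lemma key_pos (u1 u2 u3 v1 v2 v3 : ℝ) (hu : u1^2+u2^2+u3^2 = 1)
    (hv : v1^2+v2^2+v3^2 = 1) (huv : u1*v1+u2*v2+u3*v3 = 0) (hne : 0 < u2^2+u3^2) :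
    0 < (2*u3*v2*v3 - u2 - u2*v3^2 + u2*v2^2 + u1*v1*v2)^2
        + (-u3 + u3*v3^2 - u3*v2^2 + 2*u2*v2*v3 + u1*v1*v3)^2 := by
  have hid : (2*u3*v2*v3 - u2 - u2*v3^2 + u2*v2^2 + u1*v1*v2)^2
      + (-u3 + u3*v3^2 - u3*v2^2 + 2*u2*v2*v3 + u1*v1*v3)^2
      = (u2^2+u3^2) + (u3*v2-u2*v3)^2*(3-v1^2) := by
    linear_combination (u3*v3*(v3^2+v2^2-2) + u2*v2*(v2^2+v3^2-2) + u1*v1*(v3^2+v2^2)) * huv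
      + (u3*v2-u2*v3)^2 * hv
  have h3 : v1^2 ≤ 1 := by nlinarith [sq_nonneg v2, sq_nonneg v3]
  nlinarith [sq_nonneg (u3*v2-u2*v3)]

/-- For a `q`-orthonormal basis `(u',v')` of a 2-plane `W ⊆ P`: if
`u' ∉ L` then `π_B` restricted to `R(u',v')` is a linear isomorphism onto `B`, while if
`u' ∈ L` then `R(u',v') = T`. -/
theorem projection_R_general
    (W : Submodule ℝ SplitOct) (hWP : W ≤ Pplane)
    (hWdim : Module.finrank ℝ W = 2)
    (u' v' : SplitOct) (hu'W : u' ∈ W) (hv'W : v' ∈ W)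
    (hqu' : q u' = 1) (hqv' : q v' = 1) (huv' : polar u' v' = 0)
    (hbasis : Submodule.span ℝ {u', v'} = W) :
    (u' ∉ Lline →
      ∀ b ∈ Bplane, ∃! z, z ∈ Rsub u' v' (hWP hu'W) (hWP hv'W) ∧ z - b ∈ orth Bplane) ∧
    (u' ∈ Lline → Rsub u' v' (hWP hu'W) (hWP hv'W) = Tplane) := by
  obtain ⟨p1, p2, p3, hueq⟩ := mem_P_iff.mp (hWP hu'W)
  obtain ⟨q1, q2, q3, hveq⟩ := mem_P_iff.mp (hWP hv'W)
  subst hueq; subst hveq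
  rw [q_P] at hqu' hqv'
  rw [polar_PP] at huv'
  constructor
  · -- u' ∉ L
    intro hL b hb
    obtain ⟨c, d, hbeq⟩ := mem_B_iff.mp hb
    subst hbeq
    have hne : 0 < p2^2 + p3^2 := by
      rcases lt_or_eq_of_le (by positivity : (0:ℝ) ≤ p2^2 + p3^2) with h | h
      · exact h
      · exfalso
        have h2 : p2 = 0 := by nlinarith [sq_nonneg p2, sq_nonneg p3]
        have h3 : p3 = 0 := by nlinarith [sq_nonneg p2, sq_nonneg p3]
        exact hL (mem_L_iff.mpr ⟨p1, by rw [h2, h3]⟩)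
    obtain ⟨A0, hA0⟩ : ∃ x : ℝ, x = 2*p3*q2*q3 - p2 - p2*q3^2 + p2*q2^2 + p1*q1*q2 := ⟨_, rfl⟩
    obtain ⟨A1, hA1⟩ : ∃ x : ℝ, x = -p3 + p3*q3^2 - p3*q2^2 + 2*p2*q2*q3 + p1*q1*q3 := ⟨_, rfl⟩
    obtain ⟨A2, hA2⟩ : ∃ x : ℝ, x = p3*q1*q2 + p2*q1*q3 - 2*p1*q2*q3 := ⟨_, rfl⟩
    obtain ⟨A3, hA3⟩ : ∃ x : ℝ, x = p3*q1*q3 - p2*q1*q2 - p1*q3^2 + p1*q2^2 := ⟨_, rfl⟩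
    have hD : 0 < A0^2 + A1^2 := by
      rw [hA0, hA1]; exact key_pos _ _ _ _ _ _ hqu' hqv' huv' hne
    have hDne : A0^2 + A1^2 ≠ 0 := ne_of_gt hD
    refine ⟨((0, (⟨(A0*(-(A2*c+A3*d)) + A1*(A2*d-A3*c))/(A0^2+A1^2),
        (A1*(-(A2*c+A3*d)) - A0*(A2*d-A3*c))/(A0^2+A1^2), c, d⟩ : ℍ[ℝ])) : SplitOct), ⟨?_, ?_⟩, ?_⟩
    · rw [mem_Rsub_iff]
      refine ⟨mem_orthP_iff.mpr ⟨_, rfl⟩, ?_, ?_⟩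
      · rw [condA_eval, ← hA0, ← hA1, ← hA2, ← hA3]
        field_simp
        ring
      · rw [condB_eval, ← hA0, ← hA1, ← hA2, ← hA3]
        field_simp
        ring
    · rw [mem_orthB_iff]
      refine ⟨by simp, by simp, by simp⟩
    · rintro y ⟨hyR, hyB⟩
      rw [mem_Rsub_iff] at hyR
      obtain ⟨horth, hA, hB⟩ := hyR
      obtain ⟨w, rfl⟩ := mem_orthP_iff.mp horth
      obtain ⟨x0, x1, x2, x3⟩ := w
      rw [mem_orthB_iff] at hyB
      obtain ⟨-, hj, hk⟩ := hyB
      simp only [Prod.snd_sub, QuaternionAlgebra.imJ_sub, QuaternionAlgebra.imK_sub] at hj hk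
      have hx2 : x2 = c := by simpa [sub_eq_zero] using hj
      have hx3 : x3 = d := by simpa [sub_eq_zero] using hk
      subst hx2; subst hx3
      rw [condA_eval, ← hA0, ← hA1, ← hA2, ← hA3] at hA
      rw [condB_eval, ← hA0, ← hA1, ← hA2, ← hA3] at hB
      refine Prod.ext rfl ?_
      apply QuaternionAlgebra.ext
      · rw [eq_div_iff hDne]
        linear_combination A0 * hA + A1 * hB
      · rw [eq_div_iff hDne]
        linear_combination A1 * hA - A0 * hB
      · rfl
      · rfl
  · -- u' ∈ L
    intro hLmem
    obtain ⟨s, hueq⟩ := mem_L_iff.mp hLmem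
    have hp2 : p2 = 0 := congrArg (fun x => x.1.imJ) hueq
    have hp3 : p3 = 0 := congrArg (fun x => x.1.imK) hueq
    have hp1 : p1 = s := congrArg (fun x => x.1.imI) hueq
    subst hp2; subst hp3
    have hs : p1 ≠ 0 := by
      intro h
      rw [h] at hqu'
      norm_num at hqu'
    have hq1 : q1 = 0 := by
      have h0 : p1 * q1 = 0 := by linarith [huv']
      rcases mul_eq_zero.mp h0 with h | h
      · exact absurd h hs
      · exact h
    subst hq1
    have hq23 : q2^2 + q3^2 = 1 := by linarith [hqv']
    ext z
    rw [mem_Rsub_iff]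
    constructor
    · rintro ⟨horth, hA, hB⟩
      obtain ⟨w, rfl⟩ := mem_orthP_iff.mp horth
      obtain ⟨x0, x1, x2, x3⟩ := w
      rw [condA_eval] at hA
      rw [condB_eval] at hB
      have hx2 : p1 * x2 = 0 := by
        linear_combination (q2^2 - q3^2) * hB - 2*q2*q3 * hA - p1*x2*(q2^2+q3^2+1) * hq23
      have hx3 : p1 * x3 = 0 := by
        linear_combination (q2^2 - q3^2) * hA + 2*q2*q3 * hB - p1*x3*(q2^2+q3^2+1) * hq23
      have hx2' : x2 = 0 := by
        rcases mul_eq_zero.mp hx2 with h | h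
        · exact absurd h hs
        · exact h
      have hx3' : x3 = 0 := by
        rcases mul_eq_zero.mp hx3 with h | h
        · exact absurd h hs
        · exact h
      exact mem_T_iff.mpr ⟨x0, x1, by rw [hx2', hx3']⟩
    · intro hz
      obtain ⟨a, b, rfl⟩ := mem_T_iff.mp hz
      refine ⟨mem_orthP_iff.mpr ⟨_, rfl⟩, ?_, ?_⟩
      · rw [condA_eval]; ring
      · rw [condB_eval]; ring
end SplitOct
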